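/- In the SEM $M_Q$ constructed from a probabilistic Moore machine $Q$, for all times $t \geq 0$, states $s$, and sequences $\vec{\imath}$, $\vec{o}$, $\vec{s}$ of lengths $k$, $k+1$, $k+1$ respectively: $\mathcal{P}(\vec{S}^{t:t+k} = \vec{s} \wedge \vec{O}^{t:t+k} = \vec{o} \mid \mathrm{do}(S_t := s), \mathrm{do}(\vec{I}^{t:t+k-1} := \vec{\imath})) = Q(s, \vec{\imath})(\vec{o}, \vec{s})$, i.e., the interventional distribution over state and output trajectories in the causal model equals the trace distribution of the Moore machine. -/

import Mathlib

/-- Trace probability of a probabilistic Moore machine. -/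
noncomputable def ptrace {S I O : Type*} [Fintype S] [DecidableEq S] [DecidableEq O]
    (τ : S → I → S → ℝ) (σ : S → O) : S → List I → List O → List S → ℝ
  | s, [], os, ss => if os = [σ s] ∧ ss = [s] then 1 else 0
  | s, i :: is, o :: os, s1 :: ss =>
      if o = σ s ∧ s1 = s then ∑ s' : S, τ s i s' * ptrace τ σ s' is os ss else 0
  | _, _ :: _, _, _ => 0

/-- Interventional probability in the SEM `M_Q` of a state/output trajectory
under `do(S_t := s)` and `do(I⃗ := isf)`, given by Pearl's truncated
factorization: the product of the conditional probabilities of the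
non-intervened variables given their parents. -/
noncomputable def intervProb {S I O : Type*} [Fintype S] [DecidableEq S] [DecidableEq O]
    (τ : S → I → S → ℝ) (σ : S → O) (s : S) (k : ℕ)
    (isf : Fin k → I) (osf : Fin (k + 1) → O) (ssf : Fin (k + 1) → S) : ℝ :=
  (if ssf 0 = s then (1 : ℝ) else 0) *
  (if osf 0 = σ (ssf 0) then 1 else 0) *
  ∏ κ : Fin k,
    τ (ssf κ.castSucc) (isf κ) (ssf κ.succ) *
      (if osf κ.succ = σ (ssf κ.succ) then 1 else 0)

/-- in the SEM `M_Q` constructed from a probabilistic Moore machine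
`Q`, the interventional distribution over state and output trajectories (under
`do(S_t := s)` and intervening on all inputs) equals the trace distribution
`Q(s, i⃗)(o⃗, s⃗)` of the machine. -/
theorem intervProb_eq_ptrace
    {S I O : Type*} [Fintype S] [DecidableEq S] [DecidableEq O]
    (τ : S → I → S → ℝ) (σ : S → O) (s : S) (k : ℕ)
    (isf : Fin k → I) (osf : Fin (k + 1) → O) (ssf : Fin (k + 1) → S) :
    intervProb τ σ s k isf osf ssf =
      ptrace τ σ s (List.ofFn isf) (List.ofFn osf) (List.ofFn ssf) := by
  induction k generalizing s with
  | zero =>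
      simp only [intervProb, List.ofFn_zero, List.ofFn_succ, ptrace,
        Finset.univ_eq_empty, Finset.prod_empty, mul_one]
      rcases eq_or_ne (ssf 0) s with h | h
      · subst h; simp [and_comm]
      · simp [h]
  | succ k ih =>
      rw [List.ofFn_succ (f := isf), List.ofFn_succ (f := osf), List.ofFn_succ (f := ssf)]
      rw [ptrace]
      have hsum : (∑ s' : S, τ s (isf 0) s' *
          ptrace τ σ s' (List.ofFn fun i => isf i.succ) (List.ofFn fun i => osf i.succ)
            (List.ofFn fun i => ssf i.succ)) =
          τ s (isf 0) (ssf 1) * ((if osf 1 = σ (ssf 1) then (1:ℝ) else 0) *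
            ∏ κ : Fin k, τ (ssf κ.succ.castSucc) (isf κ.succ) (ssf κ.succ.succ) *
              (if osf κ.succ.succ = σ (ssf κ.succ.succ) then 1 else 0)) := by
        have h : ∀ s' : S, ptrace τ σ s' (List.ofFn fun i => isf i.succ)
            (List.ofFn fun i => osf i.succ) (List.ofFn fun i => ssf i.succ) =
            intervProb τ σ s' k (fun i => isf i.succ) (fun i => osf i.succ)
              (fun i => ssf i.succ) := fun s' => (ih s' _ _ _).symm
        simp only [h, intervProb]
        simp only [mul_ite, ite_mul, one_mul, zero_mul, mul_zero, mul_one]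
        rw [Finset.sum_eq_single (ssf 1)]
        · simp [mul_assoc]
        · intro b _ hb
          simp [Ne.symm hb]
        · simp
      rcases eq_or_ne (ssf 0) s with h0 | h0
      · rcases eq_or_ne (osf 0) (σ s) with h1 | h1
        · rw [if_pos ⟨h1, h0⟩, hsum]
          rw [intervProb, Fin.prod_univ_succ]
          simp only [Fin.castSucc_zero, Fin.succ_zero_eq_one, Fin.succ_castSucc,
            h0, h1, if_pos rfl, if_true]
          simp only [Fin.castSucc_succ]
          ac_rfl
        · rw [if_neg (by tauto)]
          simp [intervProb, h0, h1]
      · rw [if_neg (by tauto)]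
        simp [intervProb, h0]
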